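/- Let μ be a Borel probability measure on a metric space (X,d) satisfying μ(A_r) ≥ 1 - α(r) for all Borel A with μ(A) ≥ 1/2 and all r ≥ 0. Then for every measurable f : X → ℝ ∪ {+∞} bounded from below with μ(f = +∞) < 1/2, μ(Q_t f > m(f) + r) ≤ α(√(rt)) for all r, t > 0. -/

import Mathlib

open MeasureTheory Set Filter Topology

/-- The median `m(f) = inf {m ∈ ℝ : μ(f ≤ m) ≥ 1/2}` of an extended-real-valued
function. -/
noncomputable def med {X : Type*} [MeasurableSpace X] (μ : Measure X) (f : X → EReal) : ℝ :=
  sInf {m : ℝ | (1 : ENNReal) / 2 ≤ μ {x | f x ≤ (m : EReal)}}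

/-- The inf-convolution `Q_t f (x) = inf_y (f y + d(x,y)²/t)` for `f : X → ℝ ∪ {+∞}`
encoded with values in `EReal`. -/
noncomputable def infConvE {X : Type*} [MetricSpace X] (t : ℝ) (f : X → EReal) (x : X) :
    EReal :=
  ⨅ y : X, f y + ((dist x y ^ 2 / t : ℝ) : EReal)

/-- if `μ` satisfies the concentration inequality `μ(A_r) ≥ 1 - α(r)`
for all Borel `A` with `μ(A) ≥ 1/2` and all `r ≥ 0`, then for every measurable
`f : X → ℝ ∪ {+∞}` bounded from below with `μ(f = +∞) < 1/2`,
`μ(Q_t f > m(f) + r) ≤ α(√(rt))` for all `r, t > 0`. -/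
theorem infConv_deviation_of_concentration {X : Type*} [MetricSpace X] [MeasurableSpace X]
    [OpensMeasurableSpace X] (μ : Measure X) [IsProbabilityMeasure μ]
    (α : ℝ → ℝ) (hα : AntitoneOn α (Ici 0))
    (H : ∀ A : Set X, MeasurableSet A → 1 / 2 ≤ μ A → ∀ r : ℝ, 0 ≤ r →
      1 - ENNReal.ofReal (α r) ≤ μ {x | Metric.infDist x A ≤ r}) :
    ∀ f : X → EReal, Measurable f → (∃ c : ℝ, ∀ x, (c : EReal) ≤ f x) →
      μ {x | f x = ⊤} < 1 / 2 →
      ∀ r t : ℝ, 0 < r → 0 < t →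
        μ {x | ((med μ f + r : ℝ) : EReal) < infConvE t f x} ≤
          ENNReal.ofReal (α (Real.sqrt (r * t))) := by
  intro f hf hbd htop r t hr ht
  obtain ⟨c, hc⟩ := hbd
  set S : Set ℝ := {m : ℝ | (1 : ENNReal) / 2 ≤ μ {x | f x ≤ (m : EReal)}} with hS
  set m : ℝ := med μ f with hm
  have hmeas : ∀ a : ℝ, MeasurableSet {x | f x ≤ (a : EReal)} := by
    intro a
    exact hf measurableSet_Iic
  -- S is nonempty
  have hne : S.Nonempty := by
    have h1 : (1 : ENNReal) / 2 < μ {x | f x ≠ ⊤} := by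
      have hTm : MeasurableSet {x | f x = ⊤} := hf (measurableSet_singleton _)
      have hco : μ {x | f x ≠ ⊤} = 1 - μ {x | f x = ⊤} := by
        have h' := measure_compl (μ := μ) hTm (measure_ne_top μ _)
        rw [measure_univ] at h'
        exact h'
      rw [hco]
      rw [(ENNReal.cancel_of_ne (measure_ne_top μ _)).lt_tsub_iff_right]
      calc (1:ENNReal)/2 + μ {x | f x = ⊤} < 1/2 + 1/2 := by
            exact ENNReal.add_lt_add_left (by norm_num) htop
        _ = 1 := ENNReal.add_halves 1
    have hunion : {x | f x ≠ ⊤} = ⋃ n : ℕ, {x | f x ≤ ((n : ℝ) : EReal)} := by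
      ext x
      simp only [mem_setOf_eq, mem_iUnion]
      constructor
      · intro hx
        have hbot : f x ≠ ⊥ := by
          intro hb
          have := hc x
          rw [hb] at this
          exact absurd this (by simp)
        obtain ⟨n, hn⟩ := exists_nat_ge (f x).toReal
        refine ⟨n, ?_⟩
        rw [← EReal.coe_toReal hx hbot]
        exact_mod_cast hn
      · rintro ⟨n, hn⟩
        intro he
        rw [he] at hn
        exact absurd hn (not_le.2 (EReal.coe_lt_top _))
    rw [hunion] at h1
    have hmono : Monotone (fun n : ℕ => {x | f x ≤ ((n : ℝ) : EReal)}) := by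
      intro a b hab x hx
      simp only [mem_setOf_eq] at hx ⊢
      refine le_trans hx ?_
      have : ((a:ℝ):EReal) ≤ ((b:ℝ):EReal) := by exact_mod_cast Nat.cast_le.2 hab
      exact this
    rw [hmono.measure_iUnion] at h1
    obtain ⟨n, hn⟩ := lt_iSup_iff.1 h1
    exact ⟨n, hn.le⟩
  have hbdd : BddBelow S := by
    refine ⟨c - 1, fun a ha => ?_⟩
    have ha' : (1 : ENNReal) / 2 ≤ μ {x | f x ≤ (a : EReal)} := ha
    have hpos : μ {x | f x ≤ (a : EReal)} ≠ 0 := by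
      intro h0
      rw [h0] at ha'
      exact absurd ha' (by simp)
    obtain ⟨x, hx⟩ := nonempty_of_measure_ne_zero hpos
    have : (c : EReal) ≤ (a : EReal) := le_trans (hc x) (by exact hx)
    have : c ≤ a := by exact_mod_cast this
    linarith
  -- the median set has measure at least 1/2
  have hA : (1 : ENNReal) / 2 ≤ μ {x | f x ≤ (m : EReal)} := by
    have hseq : ∀ n : ℕ, (1 : ENNReal) / 2 ≤ μ {x | f x ≤ ((m + 1 / (n + 1) : ℝ) : EReal)} := by
      intro n
      have hε : (0:ℝ) < 1 / (n + 1) := by positivity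
      have hlt : sInf S < m + 1 / (n + 1) := by
        have hms : sInf S = m := rfl
        rw [hms]; linarith
      obtain ⟨a, haS, halt⟩ := exists_lt_of_csInf_lt hne hlt
      refine le_trans haS (measure_mono fun x hx => ?_)
      simp only [mem_setOf_eq] at hx ⊢
      exact le_trans hx (by exact_mod_cast halt.le)
    have hinter : {x | f x ≤ (m : EReal)} =
        ⋂ n : ℕ, {x | f x ≤ ((m + 1 / (n + 1) : ℝ) : EReal)} := by
      ext x
      simp only [mem_setOf_eq, mem_iInter]
      constructor
      · intro hx n
        refine le_trans hx ?_
        have : (0:ℝ) < 1 / (n + 1) := by positivity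
        exact_mod_cast (by linarith : m ≤ m + 1 / (n+1))
      · intro hx
        have htend : Tendsto (fun n : ℕ => ((m + 1 / (n + 1) : ℝ) : EReal)) atTop
            (𝓝 ((m : ℝ) : EReal)) := by
          have h1 : Tendsto (fun n : ℕ => (m + 1 / (n + 1) : ℝ)) atTop (𝓝 m) := by
            have : Tendsto (fun n : ℕ => (1 / ((n : ℝ) + 1) : ℝ)) atTop (𝓝 0) := tendsto_one_div_add_atTop_nhds_zero_nat
            have h2 := this.const_add m
            simpa using h2
          exact (continuous_coe_real_ereal.tendsto m).comp h1
        exact ge_of_tendsto htend (Eventually.of_forall hx)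
    rw [hinter]
    have hanti : Antitone (fun n : ℕ => {x | f x ≤ ((m + 1 / (n + 1) : ℝ) : EReal)}) := by
      intro a b hab x hx
      simp only [mem_setOf_eq] at hx ⊢
      refine le_trans hx ?_
      have hab' : (a:ℝ) ≤ b := Nat.cast_le.2 hab
      have h1 : (1:ℝ) / (b + 1) ≤ 1 / (a + 1) := by
        apply one_div_le_one_div_of_le (by positivity)
        linarith
      exact_mod_cast (by linarith : m + 1/((b:ℝ)+1) ≤ m + 1/((a:ℝ)+1))
    have htendμ := tendsto_measure_iInter_atTop (fun n => (hmeas _).nullMeasurableSet) hanti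
      ⟨0, measure_ne_top μ _⟩
    exact ge_of_tendsto htendμ (Eventually.of_forall hseq)
  -- apply the concentration hypothesis
  set A : Set X := {x | f x ≤ (m : EReal)} with hAdef
  set s : ℝ := Real.sqrt (r * t) with hsdef
  have hs : 0 ≤ s := Real.sqrt_nonneg _
  have hAne : A.Nonempty := by
    apply nonempty_of_measure_ne_zero (μ := μ)
    intro h0
    rw [h0] at hA
    exact absurd hA (by simp)
  have hB := H A (hmeas m) hA s hs
  set B : Set X := {x | Metric.infDist x A ≤ s} with hBdef
  have hBmeas : MeasurableSet B := by
    have : IsClosed B := isClosed_le (Metric.continuous_infDist_pt A) continuous_const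
    exact this.measurableSet
  -- key inclusion
  have hsub : {x | ((m + r : ℝ) : EReal) < infConvE t f x} ⊆ Bᶜ := by
    intro x hx hxB
    have hxB' : Metric.infDist x A ≤ s := hxB
    simp only [mem_setOf_eq] at hx
    refine absurd hx (not_lt.2 ?_)
    have bound : ∀ n : ℕ, infConvE t f x ≤
        ((m + (s + 1 / (n + 1)) ^ 2 / t : ℝ) : EReal) := by
      intro n
      have hε : (0:ℝ) < 1 / (n + 1) := by positivity
      have hlt : Metric.infDist x A < s + 1 / (n + 1) := by linarith
      obtain ⟨y, hyA, hdy⟩ := (Metric.infDist_lt_iff hAne).1 hlt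
      calc infConvE t f x ≤ f y + ((dist x y ^ 2 / t : ℝ) : EReal) := iInf_le _ y
        _ ≤ (m : EReal) + (((s + 1 / (n + 1)) ^ 2 / t : ℝ) : EReal) := by
            apply add_le_add hyA
            apply EReal.coe_le_coe_iff.2
            gcongr <;> first | exact dist_nonneg | exact hdy.le
        _ = ((m + (s + 1 / (n + 1)) ^ 2 / t : ℝ) : EReal) := by
            rw [← EReal.coe_add]
    have htend : Tendsto (fun n : ℕ => ((m + (s + 1 / (n + 1)) ^ 2 / t : ℝ) : EReal)) atTop
        (𝓝 ((m + r : ℝ) : EReal)) := by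
      have h1 : Tendsto (fun n : ℕ => (m + (s + 1 / (n + 1)) ^ 2 / t : ℝ)) atTop
          (𝓝 (m + r)) := by
        have h0 : Tendsto (fun n : ℕ => (1 / (n + 1) : ℝ)) atTop (𝓝 0) :=
          tendsto_one_div_add_atTop_nhds_zero_nat
        have h2 : Tendsto (fun n : ℕ => (m + (s + 1 / (n + 1)) ^ 2 / t : ℝ)) atTop
            (𝓝 (m + (s + 0) ^ 2 / t)) := by
          exact ((h0.const_add s).pow 2).div_const t |>.const_add m
        have hs2 : (s + 0) ^ 2 / t = r := by
          rw [add_zero, hsdef, Real.sq_sqrt (by positivity)]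
          field_simp
        rwa [hs2] at h2
      exact (continuous_coe_real_ereal.tendsto _).comp h1
    exact ge_of_tendsto htend (Eventually.of_forall bound)
  calc μ {x | ((m + r : ℝ) : EReal) < infConvE t f x} ≤ μ Bᶜ := measure_mono hsub
    _ = 1 - μ B := by rw [measure_compl hBmeas (measure_ne_top μ _), measure_univ]
    _ ≤ ENNReal.ofReal (α s) := by
        rw [tsub_le_iff_left]
        have := tsub_le_iff_right.1 hB
        calc (1:ENNReal) ≤ μ B + ENNReal.ofReal (α s) := this
          _ = μ B + ENNReal.ofReal (α s) := rfl
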